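/- (Value function of k-th iterate) With the iteration of policy improvement as above, the value function after k iterations satisfies J^{π^k}(t,x;w) = A^{T-t-k}(σ²r_f²/(a²+σ²))^k (x-ρ_t w)² + (λ/2)k ln((a²+σ²)/(πλ)) + (λ/2)Σ_{i=0}^{k-1} i·ln(σ²r_f²/(a²+σ²)) + (λ ln A/2) k(T-t-k) + f(t+k), for 0 ≤ k ≤ T-t. -/

import Mathlib

open MeasureTheory Real

/-- Gaussian density with mean `m` and variance `s2`. -/
noncomputable def gaussPdf (m s2 u : ℝ) : ℝ :=
  (Real.sqrt (2 * Real.pi * s2))⁻¹ * Real.exp (-(u - m) ^ 2 / (2 * s2))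

/-- A probability density on ℝ with finite relevant integrals. -/
def IsAdmissibleDensity (p : ℝ → ℝ) : Prop :=
  (∀ u, 0 ≤ p u) ∧ (∫ u, p u) = 1 ∧
    Integrable (fun u => u ^ 2 * p u) ∧
    Integrable (fun u => p u * Real.log (p u))

/-- `E[Jnext(r_f x + r U)] + λ ∫ p ln p`, with `U ~ p` independent of `r`. -/
noncomputable def stepVal {Ω : Type*} [MeasurableSpace Ω] (μ : Measure Ω)
    (r : Ω → ℝ) (rf lam : ℝ) (Jnext : ℝ → ℝ) (x : ℝ) (p : ℝ → ℝ) : ℝ :=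
  (∫ ω, ∫ u, Jnext (rf * x + r ω * u) * p u ∂volume ∂μ) +
    lam * ∫ u, p u * Real.log (p u)

/-- The function `f` of the paper's Theorem 2. -/
noncomputable def fPaper (lam B C A a σ w b : ℝ) (T s : ℕ) : ℝ :=
  lam * B * (a ^ 2 + σ ^ 2) * (1 - (C * A) ^ (T - s)) / (1 - C * A) -
    lam / 2 * Real.log (2 * Real.pi * lam * B) * ((T : ℝ) - s) -
    lam / 2 * ((T : ℝ) - s) -
    lam / 2 * Real.log C * (∑ i ∈ Finset.range (T - s), (i : ℝ)) - (w - b) ^ 2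


lemma int_sq_exp {b : ℝ} (hb : 0 < b) :
    Integrable fun x : ℝ => x ^ 2 * exp (-b * x ^ 2) := by
  have := integrable_rpow_mul_exp_neg_mul_sq hb (s := 2) (by norm_num)
  simpa [Real.rpow_natCast] using this

lemma integral_sq_exp {b : ℝ} (hb : 0 < b) :
    ∫ x : ℝ, x ^ 2 * exp (-b * x ^ 2) = √(π / b) / (2 * b) := by
  have hF : ∀ x : ℝ, HasDerivAt (fun x : ℝ => x * exp (-b * x ^ 2))
      (exp (-b * x ^ 2) - 2 * b * (x ^ 2 * exp (-b * x ^ 2))) x := by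
    intro x
    have h1 : HasDerivAt (fun x : ℝ => -b * x ^ 2) (-b * (2 * x)) x := by
      simpa using ((hasDerivAt_pow 2 x).const_mul (-b))
    have := (hasDerivAt_id' x).mul h1.exp
    refine this.congr_deriv ?_
    ring
  have hint : Integrable fun x : ℝ =>
      exp (-b * x ^ 2) - 2 * b * (x ^ 2 * exp (-b * x ^ 2)) :=
    (integrable_exp_neg_mul_sq hb).sub ((int_sq_exp hb).const_mul _)
  have h0 := integral_eq_zero_of_hasDerivAt_of_integrable hF hint
    (integrable_mul_exp_neg_mul_sq hb)
  rw [integral_sub (integrable_exp_neg_mul_sq hb) ((int_sq_exp hb).const_mul _),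
    integral_const_mul, integral_gaussian, sub_eq_zero] at h0
  field_simp at h0 ⊢
  linarith

section Gauss
variable {m s2 : ℝ} (hs2 : 0 < s2)
include hs2

lemma gauss_eq (u : ℝ) :
    gaussPdf m s2 u = (√(2 * π * s2))⁻¹ * exp (-(2 * s2)⁻¹ * (u - m) ^ 2) := by
  rw [gaussPdf]; ring_nf

lemma gauss_pos (u : ℝ) : 0 < gaussPdf m s2 u := by
  rw [gauss_eq hs2]
  have : 0 < 2 * π * s2 := by positivity
  positivity

lemma gauss_integrable : Integrable (gaussPdf m s2) := by
  have hb : 0 < (2 * s2)⁻¹ := by positivity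
  have : Integrable fun u : ℝ => exp (-(2 * s2)⁻¹ * (u - m) ^ 2) := by
    exact (integrable_exp_neg_mul_sq hb).comp_sub_right m
  apply (this.const_mul (√(2 * π * s2))⁻¹).congr
  filter_upwards with u
  rw [gauss_eq hs2]

lemma gauss_integral : ∫ u, gaussPdf m s2 u = 1 := by
  have hb : 0 < (2 * s2)⁻¹ := by positivity
  have h1 : ∫ u : ℝ, exp (-(2 * s2)⁻¹ * (u - m) ^ 2) = √(π / (2 * s2)⁻¹) := by
    rw [← integral_gaussian ((2 * s2)⁻¹)]
    exact integral_sub_right_eq_self (fun u => exp (-(2 * s2)⁻¹ * u ^ 2)) m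
  have hsq : √(π / (2 * s2)⁻¹) = √(2 * π * s2) := by
    congr 1; field_simp
  simp_rw [gauss_eq hs2]
  rw [integral_const_mul, h1, hsq, inv_mul_cancel₀]
  have : (0:ℝ) < 2 * π * s2 := by positivity
  positivity

lemma gauss_sq_integrable :
    Integrable fun u => (u - m) ^ 2 * gaussPdf m s2 u := by
  have hb : 0 < (2 * s2)⁻¹ := by positivity
  have : Integrable fun u : ℝ => (u - m) ^ 2 * exp (-(2 * s2)⁻¹ * (u - m) ^ 2) := by
    exact (int_sq_exp hb).comp_sub_right m
  have h2 := this.const_mul (√(2 * π * s2))⁻¹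
  apply h2.congr
  filter_upwards with u
  rw [gauss_eq hs2]; ring

lemma gauss_sq_integral : ∫ u, (u - m) ^ 2 * gaussPdf m s2 u = s2 := by
  have hb : 0 < (2 * s2)⁻¹ := by positivity
  have h1 : ∫ u : ℝ, (u - m) ^ 2 * exp (-(2 * s2)⁻¹ * (u - m) ^ 2)
      = √(π / (2 * s2)⁻¹) / (2 * (2 * s2)⁻¹) := by
    rw [← integral_sq_exp hb]
    exact integral_sub_right_eq_self
      (fun u => u ^ 2 * exp (-(2 * s2)⁻¹ * u ^ 2)) m
  have h2 : ∫ u, (u - m) ^ 2 * gaussPdf m s2 u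
      = (√(2 * π * s2))⁻¹ * ∫ u : ℝ, (u - m) ^ 2 * exp (-(2 * s2)⁻¹ * (u - m) ^ 2) := by
    rw [← integral_const_mul]
    congr 1; ext u; rw [gauss_eq hs2]; ring
  have hsq : √(π / (2 * s2)⁻¹) = √(2 * π * s2) := by
    congr 1; field_simp
  rw [h2, h1, hsq]
  have hpos : (0:ℝ) < √(2 * π * s2) := by
    have : 0 < 2 * π * s2 := by positivity
    positivity
  field_simp

lemma gauss_log (u : ℝ) :
    Real.log (gaussPdf m s2 u) = -(1/2) * Real.log (2 * π * s2) - (u - m) ^ 2 / (2 * s2) := by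
  have hpos : (0:ℝ) < 2 * π * s2 := by positivity
  rw [gaussPdf, Real.log_mul (by positivity) (exp_ne_zero _), Real.log_inv,
    Real.log_exp, Real.log_sqrt hpos.le]
  ring

end Gauss

section Gauss2
variable {m s2 : ℝ} (hs2 : 0 < s2)
include hs2

lemma gauss_continuous : Continuous (gaussPdf m s2) := by
  unfold gaussPdf
  fun_prop

lemma gauss_sub_integrable :
    Integrable fun u => (u - m) * gaussPdf m s2 u := by
  apply Integrable.mono' ((gauss_integrable hs2).add (gauss_sq_integrable hs2))
  · exact ((continuous_id.sub continuous_const).mul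
      (gauss_continuous hs2)).aestronglyMeasurable
  · filter_upwards with u
    have hg := (gauss_pos hs2 (m := m) u).le
    rw [Real.norm_eq_abs, abs_mul, abs_of_nonneg hg, Pi.add_apply]
    have h1 : |u - m| ≤ 1 + (u - m) ^ 2 := by nlinarith [abs_nonneg (u - m), sq_abs (u - m)]
    nlinarith [mul_le_mul_of_nonneg_right h1 hg]

lemma gauss_sub_integral : ∫ u, (u - m) * gaussPdf m s2 u = 0 := by
  have hb : 0 < (2 * s2)⁻¹ := by positivity
  have h0 : ∫ u : ℝ, (u - m) * exp (-(2 * s2)⁻¹ * (u - m) ^ 2) = 0 := by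
    rw [integral_sub_right_eq_self (fun u => u * exp (-(2 * s2)⁻¹ * u ^ 2)) m]
    have h := integral_neg_eq_self (fun u : ℝ => u * exp (-(2 * s2)⁻¹ * u ^ 2)) (volume : Measure ℝ)
    simp only [neg_sq, neg_mul, integral_neg] at h
    simp only [neg_mul]
    linarith
  have h2 : ∫ u, (u - m) * gaussPdf m s2 u
      = (√(2 * π * s2))⁻¹ * ∫ u : ℝ, (u - m) * exp (-(2 * s2)⁻¹ * (u - m) ^ 2) := by
    rw [← integral_const_mul]
    congr 1; ext u; rw [gauss_eq hs2]; ring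
  rw [h2, h0, mul_zero]

lemma gauss_entropy_integrable :
    Integrable fun u => gaussPdf m s2 u * Real.log (gaussPdf m s2 u) := by
  have : (fun u => gaussPdf m s2 u * Real.log (gaussPdf m s2 u))
      = fun u => (-(1/2) * Real.log (2 * π * s2)) * gaussPdf m s2 u
        - (2 * s2)⁻¹ * ((u - m) ^ 2 * gaussPdf m s2 u) := by
    ext u; rw [gauss_log hs2]; field_simp
  rw [this]
  exact (((gauss_integrable hs2).const_mul _).sub ((gauss_sq_integrable hs2).const_mul _))

lemma gauss_entropy :
    ∫ u, gaussPdf m s2 u * Real.log (gaussPdf m s2 u)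
      = -(1/2) * Real.log (2 * π * s2) - 1/2 := by
  have : (fun u => gaussPdf m s2 u * Real.log (gaussPdf m s2 u))
      = fun u => (-(1/2) * Real.log (2 * π * s2)) * gaussPdf m s2 u
        - (2 * s2)⁻¹ * ((u - m) ^ 2 * gaussPdf m s2 u) := by
    ext u; rw [gauss_log hs2]; field_simp
  rw [this, integral_sub (((gauss_integrable hs2)).const_mul _)
      ((gauss_sq_integrable hs2).const_mul _), integral_const_mul, integral_const_mul,
    gauss_integral hs2, gauss_sq_integral hs2]
  field_simp

lemma gauss_admissible : IsAdmissibleDensity (gaussPdf m s2) := by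
  refine ⟨fun u => (gauss_pos hs2 u).le, gauss_integral hs2, ?_, gauss_entropy_integrable hs2⟩
  have : (fun u => u ^ 2 * gaussPdf m s2 u)
      = fun u => (u - m) ^ 2 * gaussPdf m s2 u
          + (2 * m) * ((u - m) * gaussPdf m s2 u) + (m ^ 2) * gaussPdf m s2 u := by
    ext u; ring
  rw [this]
  exact ((gauss_sq_integrable hs2).add ((gauss_sub_integrable hs2).const_mul _)).add
    ((gauss_integrable hs2).const_mul _)

end Gauss2

section Adm
variable {p : ℝ → ℝ} (hp : IsAdmissibleDensity p)
include hp

lemma adm_integrable : Integrable p := by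
  obtain ⟨h0, h1, h2, h3⟩ := hp
  by_contra h
  rw [integral_undef h] at h1
  exact one_ne_zero h1.symm

lemma adm_mul_integrable : Integrable fun u => u * p u := by
  apply Integrable.mono' ((adm_integrable hp).add hp.2.2.1)
  · exact aestronglyMeasurable_id.mul (adm_integrable hp).aestronglyMeasurable
  · filter_upwards with u
    have h0 := hp.1 u
    rw [Real.norm_eq_abs, abs_mul, abs_of_nonneg h0, Pi.add_apply]
    have h1 : |u| ≤ 1 + u ^ 2 := by nlinarith [abs_nonneg u, sq_abs u]
    nlinarith [mul_le_mul_of_nonneg_right h1 h0]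

lemma adm_qm_integrable (m : ℝ) : Integrable fun u => (u - m) ^ 2 * p u := by
  have : (fun u => (u - m) ^ 2 * p u)
      = fun u => u ^ 2 * p u - (2 * m) * (u * p u) + m ^ 2 * p u := by
    ext u; ring
  rw [this]
  exact (hp.2.2.1.sub ((adm_mul_integrable hp).const_mul _)).add
    ((adm_integrable hp).const_mul _)

lemma adm_qm_integral (m : ℝ) : ∫ u, (u - m) ^ 2 * p u
    = (∫ u, u ^ 2 * p u) - 2 * m * (∫ u, u * p u) + m ^ 2 := by
  have : (fun u => (u - m) ^ 2 * p u)
      = fun u => u ^ 2 * p u - (2 * m) * (u * p u) + m ^ 2 * p u := by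
    ext u; ring
  have i1 : Integrable fun u : ℝ => u ^ 2 * p u - 2 * m * (u * p u) := by
    exact hp.2.2.1.sub ((adm_mul_integrable hp).const_mul _)
  rw [this, integral_add i1 ((adm_integrable hp).const_mul _),
    integral_sub hp.2.2.1 ((adm_mul_integrable hp).const_mul _),
    integral_const_mul, integral_const_mul, hp.2.1, mul_one]

lemma adm_mul_log_gauss_integrable {m s2 : ℝ} (hs2 : 0 < s2) :
    Integrable fun u => p u * Real.log (gaussPdf m s2 u) := by
  have : (fun u => p u * Real.log (gaussPdf m s2 u))
      = fun u => (-(1/2) * Real.log (2 * π * s2)) * p u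
          - (2 * s2)⁻¹ * ((u - m) ^ 2 * p u) := by
    ext u; rw [gauss_log hs2]; field_simp
  rw [this]
  exact ((adm_integrable hp).const_mul _).sub ((adm_qm_integrable hp m).const_mul _)

lemma adm_mul_log_gauss_integral {m s2 : ℝ} (hs2 : 0 < s2) :
    ∫ u, p u * Real.log (gaussPdf m s2 u)
      = -(1/2) * Real.log (2 * π * s2) - (2 * s2)⁻¹ * ∫ u, (u - m) ^ 2 * p u := by
  have : (fun u => p u * Real.log (gaussPdf m s2 u))
      = fun u => (-(1/2) * Real.log (2 * π * s2)) * p u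
          - (2 * s2)⁻¹ * ((u - m) ^ 2 * p u) := by
    ext u; rw [gauss_log hs2]; field_simp
  rw [this, integral_sub ((adm_integrable hp).const_mul _)
      ((adm_qm_integrable hp m).const_mul _), integral_const_mul, integral_const_mul,
    hp.2.1, mul_one]

lemma gibbs {m s2 : ℝ} (hs2 : 0 < s2) :
    ∫ u, p u * Real.log (gaussPdf m s2 u) ≤ ∫ u, p u * Real.log (p u) := by
  have key : ∀ u, p u - gaussPdf m s2 u
      ≤ p u * Real.log (p u) - p u * Real.log (gaussPdf m s2 u) := by
    intro u
    rcases eq_or_lt_of_le (hp.1 u) with h | h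
    · rw [← h]; simp [(gauss_pos hs2 u).le]
    · have hg := gauss_pos hs2 (m := m) u
      have hlog : Real.log (gaussPdf m s2 u / p u) ≤ gaussPdf m s2 u / p u - 1 :=
        Real.log_le_sub_one_of_pos (by positivity)
      rw [Real.log_div hg.ne' h.ne'] at hlog
      have := mul_le_mul_of_nonneg_left hlog h.le
      rw [mul_sub, mul_sub, mul_div_cancel₀ _ h.ne', mul_one] at this
      linarith
  have hInt : ∫ u, (p u - gaussPdf m s2 u) = 0 := by
    rw [integral_sub (adm_integrable hp) (gauss_integrable hs2), hp.2.1,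
      gauss_integral hs2, sub_self]
  have i1 : Integrable fun u => p u - gaussPdf m s2 u := by
    exact (adm_integrable hp).sub (gauss_integrable hs2)
  have i2 : Integrable fun u => p u * Real.log (p u) - p u * Real.log (gaussPdf m s2 u) := by
    exact hp.2.2.2.sub (adm_mul_log_gauss_integrable hp hs2)
  have hmono := integral_mono i1 i2 key
  rw [hInt, integral_sub hp.2.2.2 (adm_mul_log_gauss_integrable hp hs2)] at hmono
  linarith

lemma gibbs_min {β lam m : ℝ} (hβ : 0 < β) (hlam : 0 < lam) :
    lam / 2 * Real.log (β / (π * lam))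
      ≤ β * (∫ u, (u - m) ^ 2 * p u) + lam * ∫ u, p u * Real.log (p u) := by
  set s2 := lam / (2 * β) with hs2def
  have hs2 : 0 < s2 := by positivity
  have h1 := gibbs hp (m := m) hs2
  have h2 := adm_mul_log_gauss_integral hp (m := m) hs2
  have hQ : 0 ≤ ∫ u, (u - m) ^ 2 * p u :=
    integral_nonneg fun u => mul_nonneg (sq_nonneg _) (hp.1 u)
  have hinv : (2 * s2)⁻¹ = β / lam := by
    rw [hs2def]; field_simp
  have hlog : Real.log (2 * π * s2) = - Real.log (β / (π * lam)) := by
    rw [← Real.log_inv]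
    congr 1
    rw [hs2def]
    field_simp
  have hβs : β = lam * (2 * s2)⁻¹ := by rw [hinv]; field_simp
  nlinarith [mul_le_mul_of_nonneg_left h1 hlam.le]

end Adm

lemma gibbs_eq {β lam m : ℝ} (hβ : 0 < β) (hlam : 0 < lam) :
    β * (∫ u, (u - m) ^ 2 * gaussPdf m (lam / (2 * β)) u)
      + lam * ∫ u, gaussPdf m (lam / (2 * β)) u * Real.log (gaussPdf m (lam / (2 * β)) u)
    = lam / 2 * Real.log (β / (π * lam)) := by
  set s2 := lam / (2 * β) with hs2def
  have hs2 : 0 < s2 := by positivity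
  rw [gauss_sq_integral hs2, gauss_entropy hs2]
  have hlog : Real.log (2 * π * s2) = - Real.log (β / (π * lam)) := by
    rw [← Real.log_inv]
    congr 1
    rw [hs2def]
    field_simp
  have hβs : β * s2 = lam / 2 := by rw [hs2def]; field_simp
  rw [hlog]
  linarith

lemma stepVal_eq {Ω : Type*} [MeasurableSpace Ω] (μ : Measure Ω) [IsProbabilityMeasure μ]
    (r : Ω → ℝ) (hmeas : Measurable r) (a σ rf lam : ℝ) (hσ : 0 < σ)
    (hra : ∫ ω, r ω ∂μ = a) (hrv : ∫ ω, (r ω) ^ 2 ∂μ = a ^ 2 + σ ^ 2)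
    (Jnext : ℝ → ℝ) (α ρ c : ℝ) (hJ : ∀ y, Jnext y = α * (y - ρ) ^ 2 + c)
    (x : ℝ) {p : ℝ → ℝ} (hp : IsAdmissibleDensity p) :
    stepVal μ r rf lam Jnext x p
      = α * (a ^ 2 + σ ^ 2) *
          (∫ u, (u - (-(a * (rf * x - ρ) / (a ^ 2 + σ ^ 2)))) ^ 2 * p u)
        + α * σ ^ 2 / (a ^ 2 + σ ^ 2) * (rf * x - ρ) ^ 2 + c
        + lam * ∫ u, p u * Real.log (p u) := by
  have hs : (0:ℝ) < a ^ 2 + σ ^ 2 := by positivity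
  have hr2 : Integrable (fun ω => (r ω) ^ 2) μ := by
    by_contra h
    rw [integral_undef h] at hrv
    nlinarith
  have hr1 : Integrable r μ := by
    apply Integrable.mono' ((integrable_const (1:ℝ)).add hr2)
    · exact hmeas.aestronglyMeasurable
    · filter_upwards with ω
      rw [Real.norm_eq_abs, Pi.add_apply]
      nlinarith [abs_nonneg (r ω), sq_abs (r ω)]
  set S1 := ∫ u, u * p u with hS1
  set S2 := ∫ u, u ^ 2 * p u with hS2
  have inner : ∀ ω, ∫ u, Jnext (rf * x + r ω * u) * p u
      = (α * (r ω) ^ 2) * S2 + (2 * α * (r ω) * (rf * x - ρ)) * S1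
        + (α * (rf * x - ρ) ^ 2 + c) := by
    intro ω
    have hfe : (fun u => Jnext (rf * x + r ω * u) * p u)
        = fun u => (α * (r ω) ^ 2) * (u ^ 2 * p u)
          + (2 * α * (r ω) * (rf * x - ρ)) * (u * p u)
          + (α * (rf * x - ρ) ^ 2 + c) * p u := by
      ext u; rw [hJ]; ring
    have i1 : Integrable fun u => (α * (r ω) ^ 2) * (u ^ 2 * p u)
        + (2 * α * (r ω) * (rf * x - ρ)) * (u * p u) := by
      exact (hp.2.2.1.const_mul _).add ((adm_mul_integrable hp).const_mul _)
    rw [hfe, integral_add i1 ((adm_integrable hp).const_mul _),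
      integral_add (hp.2.2.1.const_mul _) ((adm_mul_integrable hp).const_mul _),
      integral_const_mul, integral_const_mul, integral_const_mul, hp.2.1, mul_one]
  have outer : ∫ ω, (∫ u, Jnext (rf * x + r ω * u) * p u) ∂μ
      = (α * S2) * (a ^ 2 + σ ^ 2) + (2 * α * (rf * x - ρ) * S1) * a
        + (α * (rf * x - ρ) ^ 2 + c) := by
    have hfe : (fun ω => ∫ u, Jnext (rf * x + r ω * u) * p u)
        = fun ω => (α * S2) * (r ω) ^ 2 + (2 * α * (rf * x - ρ) * S1) * (r ω)
          + (α * (rf * x - ρ) ^ 2 + c) := by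
      ext ω; rw [inner]; ring
    have i1 : Integrable (fun ω => (α * S2) * (r ω) ^ 2
        + (2 * α * (rf * x - ρ) * S1) * (r ω)) μ := by
      exact (hr2.const_mul _).add (hr1.const_mul _)
    rw [hfe, integral_add i1 (integrable_const _),
      integral_add (hr2.const_mul _) (hr1.const_mul _),
      integral_const_mul, integral_const_mul, hra, hrv, integral_const]
    simp
  have hq := adm_qm_integral hp (-(a * (rf * x - ρ) / (a ^ 2 + σ ^ 2)))
  rw [stepVal, outer, hq, ← hS1, ← hS2]
  field_simp
  ring

/-- Value function of the k-th iterate of policy improvement. -/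
theorem stmt13 {Ω : Type*} [MeasurableSpace Ω] (μ : Measure Ω) [IsProbabilityMeasure μ]
    (r : Ω → ℝ) (hmeas : Measurable r)
    (a σ rf lam w b K B C : ℝ)
    (hσ : 0 < σ) (hrf : 0 < rf) (hlam : 0 < lam) (hB : 0 < B) (hC : 0 < C)
    (hra : ∫ ω, r ω ∂μ = a) (hrv : ∫ ω, (r ω) ^ 2 ∂μ = a ^ 2 + σ ^ 2)
    (T : ℕ) (hT : 0 < T)
    (A : ℝ) (hA : A = rf ^ 2 + (a ^ 2 + σ ^ 2) * K ^ 2 + 2 * rf * a * K)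
    (hApos : 0 < A) (hCA : C * A ≠ 1)
    (ps : ℕ → ℕ → ℝ → ℝ → ℝ) (Jf : ℕ → ℕ → ℝ → ℝ)
    -- the initial policy is the given Gaussian policy
    (hp0 : ∀ t, t < T → ∀ x, ps 0 t x =
      gaussPdf (K * (x - (rf⁻¹) ^ (T - t) * w)) (lam * B * C ^ (T - t - 1)))
    -- its value function (paper's Theorem 2, first part)
    (hJ0 : ∀ t, t ≤ T → ∀ x, Jf 0 t x =
      A ^ (T - t) * (x - (rf⁻¹) ^ (T - t) * w) ^ 2 + fPaper lam B C A a σ w b T t)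
    -- each improved policy minimizes the one-step functional of the previous value
    (hmin : ∀ k t x, t < T → IsAdmissibleDensity (ps (k + 1) t x) ∧
      ∀ p : ℝ → ℝ, IsAdmissibleDensity p →
        stepVal μ r rf lam (Jf k (t + 1)) x (ps (k + 1) t x) ≤
          stepVal μ r rf lam (Jf k (t + 1)) x p)
    -- and the next value function is the value of the improved policy
    (hJrec : ∀ k t x, t < T → Jf (k + 1) t x =
      stepVal μ r rf lam (Jf k (t + 1)) x (ps (k + 1) t x)) :
    ∀ k t, t ≤ T → k ≤ T - t → ∀ x, Jf k t x =
      A ^ (T - t - k) * (σ ^ 2 * rf ^ 2 / (a ^ 2 + σ ^ 2)) ^ k *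
          (x - (rf⁻¹) ^ (T - t) * w) ^ 2 +
        lam / 2 * k * Real.log ((a ^ 2 + σ ^ 2) / (Real.pi * lam)) +
        lam / 2 * (∑ i ∈ Finset.range k,
          (i : ℝ) * Real.log (σ ^ 2 * rf ^ 2 / (a ^ 2 + σ ^ 2))) +
        lam * Real.log A / 2 * k * ((T : ℝ) - t - k) +
        fPaper lam B C A a σ w b T (t + k) := by
  have hs : (0:ℝ) < a ^ 2 + σ ^ 2 := by positivity
  have hR : (0:ℝ) < σ ^ 2 * rf ^ 2 / (a ^ 2 + σ ^ 2) := by positivity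
  intro k
  induction k with
  | zero =>
    intro t ht _ x
    rw [hJ0 t ht x]
    simp
  | succ k ih =>
    intro t ht hk x
    have htT : t < T := by omega
    have ht1 : t + 1 ≤ T := htT
    have hk1 : k ≤ T - (t + 1) := by omega
    set α : ℝ := A ^ (T - (t+1) - k) * (σ ^ 2 * rf ^ 2 / (a ^ 2 + σ ^ 2)) ^ k with hαdef
    set ρ : ℝ := (rf⁻¹) ^ (T - (t+1)) * w with hρdef
    set c : ℝ := lam / 2 * k * Real.log ((a ^ 2 + σ ^ 2) / (Real.pi * lam)) +
        lam / 2 * (∑ i ∈ Finset.range k,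
          (i : ℝ) * Real.log (σ ^ 2 * rf ^ 2 / (a ^ 2 + σ ^ 2))) +
        lam * Real.log A / 2 * k * ((T : ℝ) - (t+1) - k) +
        fPaper lam B C A a σ w b T ((t+1) + k) with hcdef
    have hJnext : ∀ y, Jf k (t+1) y = α * (y - ρ) ^ 2 + c := by
      intro y
      rw [ih (t+1) ht1 hk1 y]
      push_cast
      ring
    have hαpos : 0 < α := mul_pos (pow_pos hApos _) (pow_pos hR _)
    have hβpos : 0 < α * (a ^ 2 + σ ^ 2) := mul_pos hαpos hs
    obtain ⟨hadm, hminp⟩ := hmin k t x htT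
    set m : ℝ := -(a * (rf * x - ρ) / (a ^ 2 + σ ^ 2)) with hmdef
    have hgadm : IsAdmissibleDensity (gaussPdf m (lam / (2 * (α * (a ^ 2 + σ ^ 2))))) :=
      gauss_admissible (by positivity)
    have e1 := stepVal_eq μ r hmeas a σ rf lam hσ hra hrv (Jf k (t+1)) α ρ c hJnext x hadm
    have e2 := stepVal_eq μ r hmeas a σ rf lam hσ hra hrv (Jf k (t+1)) α ρ c hJnext x hgadm
    have upper := hminp _ hgadm
    have geq := gibbs_eq (m := m) hβpos hlam
    have lower := gibbs_min hadm (m := m) hβpos hlam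
    have hval : Jf (k+1) t x
        = α * σ ^ 2 / (a ^ 2 + σ ^ 2) * (rf * x - ρ) ^ 2 + c
          + lam / 2 * Real.log ((α * (a ^ 2 + σ ^ 2)) / (π * lam)) := by
      rw [hJrec k t x htT]
      rw [e1] at *
      rw [e2] at upper
      linarith
    rw [hval]
    -- now pure algebra
    have hsub1 : T - (t+1) = T - t - 1 := by omega
    have hsub2 : T - t = (T - t - 1) + 1 := by omega
    have hrfx : rf * x - ρ = rf * (x - (rf⁻¹) ^ (T - t) * w) := by
      rw [hρdef, hsub1, hsub2, pow_succ]
      field_simp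
      rw [Nat.add_sub_cancel]
      ring
    have hpowA : T - (t+1) - k = T - t - (k+1) := by omega
    have hlogβ : Real.log ((α * (a ^ 2 + σ ^ 2)) / (π * lam))
        = Real.log ((a ^ 2 + σ ^ 2) / (π * lam))
          + (T - t - (k+1) : ℕ) * Real.log A
          + k * Real.log (σ ^ 2 * rf ^ 2 / (a ^ 2 + σ ^ 2)) := by
      rw [hαdef, hpowA]
      rw [mul_div_assoc, mul_assoc]
      rw [Real.log_mul (by positivity) (by positivity),
        Real.log_mul (by positivity) (by positivity),
        Real.log_pow, Real.log_pow]
      push_cast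
      ring
    have hαrf : α * σ ^ 2 / (a ^ 2 + σ ^ 2) * (rf * x - ρ) ^ 2
        = A ^ (T - t - (k+1)) * (σ ^ 2 * rf ^ 2 / (a ^ 2 + σ ^ 2)) ^ (k+1) *
          (x - (rf⁻¹) ^ (T - t) * w) ^ 2 := by
      rw [hrfx, hαdef, hpowA, mul_pow, pow_succ (σ ^ 2 * rf ^ 2 / (a ^ 2 + σ ^ 2)) k]
      field_simp
    rw [hαrf, hlogβ, hcdef]
    have hcast : ((T - t - (k+1) : ℕ) : ℝ) = (T:ℝ) - t - (k+1) := by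
      rw [Nat.cast_sub (by omega : k + 1 ≤ T - t), Nat.cast_sub (by omega : t ≤ T)]
      push_cast
      ring
    rw [hcast]
    have hfP : (t + 1) + k = t + (k + 1) := by omega
    rw [hfP, Finset.sum_range_succ]
    push_cast
    ring
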